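/- Let f be an isotropic invariant of Hall tensors, i.e., f(⟨Q⟩K) = f(K) for every orthogonal 3×3 matrix Q and every Hall tensor K. Define g(A) := f(εA) for 3×3 matrices A. Then g(Q A Qᵀ) = g(A) for every orthogonal Q with det Q = 1, and g(-Q A Qᵀ) = g(A) for every orthogonal Q with det Q = -1. -/
import Mathlib


open Matrix

/-- The Levi-Civita symbol on `Fin 3`. -/
noncomputable def lc (i j k : Fin 3) : ℝ :=
  ((((j.val : ℤ) - i.val) * ((k.val : ℤ) - j.val) * ((k.val : ℤ) - i.val)) / 2 : ℤ)

/-- The Hall tensor `εA` associated to a 3×3 matrix: `k_{ijk} = Σ_l ε_{ijl} a_{lk}`. -/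
noncomputable def toHall (A : Matrix (Fin 3) (Fin 3) ℝ) : Fin 3 → Fin 3 → Fin 3 → ℝ :=
  fun i j k => ∑ l, lc i j l * A l k

/-- The matrix `εK` associated to a third order tensor: `(εK)_{ij} = Σ_{k,l} ε_{kli} k_{klj}`. -/
noncomputable def toMat (K : Fin 3 → Fin 3 → Fin 3 → ℝ) : Matrix (Fin 3) (Fin 3) ℝ :=
  Matrix.of fun i j => ∑ k, ∑ l, lc k l i * K k l j

/-- Orthogonal transformation of a third order tensor. -/
noncomputable def rot (Q : Matrix (Fin 3) (Fin 3) ℝ) (K : Fin 3 → Fin 3 → Fin 3 → ℝ) :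
    Fin 3 → Fin 3 → Fin 3 → ℝ :=
  fun i j k => ∑ p, ∑ q, ∑ r, Q i p * Q j q * Q k r * K p q r

/-- Symmetric part of a matrix. -/
noncomputable def symmPart (A : Matrix (Fin 3) (Fin 3) ℝ) : Matrix (Fin 3) (Fin 3) ℝ :=
  (1/2 : ℝ) • (A + Aᵀ)

/-- Skew-symmetric part of a matrix. -/
noncomputable def skewPart (A : Matrix (Fin 3) (Fin 3) ℝ) : Matrix (Fin 3) (Fin 3) ℝ :=
  (1/2 : ℝ) • (A - Aᵀ)

@[simp] lemma lc_000 : lc 0 0 0 = 0 := by norm_num [lc]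
@[simp] lemma lc_001 : lc 0 0 1 = 0 := by norm_num [lc]
@[simp] lemma lc_002 : lc 0 0 2 = 0 := by norm_num [lc]
@[simp] lemma lc_010 : lc 0 1 0 = 0 := by norm_num [lc]
@[simp] lemma lc_011 : lc 0 1 1 = 0 := by norm_num [lc]
@[simp] lemma lc_012 : lc 0 1 2 = 1 := by norm_num [lc]
@[simp] lemma lc_020 : lc 0 2 0 = 0 := by norm_num [lc]
@[simp] lemma lc_021 : lc 0 2 1 = -1 := by norm_num [lc]
@[simp] lemma lc_022 : lc 0 2 2 = 0 := by norm_num [lc]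
@[simp] lemma lc_100 : lc 1 0 0 = 0 := by norm_num [lc]
@[simp] lemma lc_101 : lc 1 0 1 = 0 := by norm_num [lc]
@[simp] lemma lc_102 : lc 1 0 2 = -1 := by norm_num [lc]
@[simp] lemma lc_110 : lc 1 1 0 = 0 := by norm_num [lc]
@[simp] lemma lc_111 : lc 1 1 1 = 0 := by norm_num [lc]
@[simp] lemma lc_112 : lc 1 1 2 = 0 := by norm_num [lc]
@[simp] lemma lc_120 : lc 1 2 0 = 1 := by norm_num [lc]
@[simp] lemma lc_121 : lc 1 2 1 = 0 := by norm_num [lc]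
@[simp] lemma lc_122 : lc 1 2 2 = 0 := by norm_num [lc]
@[simp] lemma lc_200 : lc 2 0 0 = 0 := by norm_num [lc]
@[simp] lemma lc_201 : lc 2 0 1 = 1 := by norm_num [lc]
@[simp] lemma lc_202 : lc 2 0 2 = 0 := by norm_num [lc]
@[simp] lemma lc_210 : lc 2 1 0 = -1 := by norm_num [lc]
@[simp] lemma lc_211 : lc 2 1 1 = 0 := by norm_num [lc]
@[simp] lemma lc_212 : lc 2 1 2 = 0 := by norm_num [lc]
@[simp] lemma lc_220 : lc 2 2 0 = 0 := by norm_num [lc]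
@[simp] lemma lc_221 : lc 2 2 1 = 0 := by norm_num [lc]
@[simp] lemma lc_222 : lc 2 2 2 = 0 := by norm_num [lc]

lemma lc_skew (i j l : Fin 3) : lc i j l = - lc j i l := by
  fin_cases i <;> fin_cases j <;> fin_cases l <;> simp

lemma detU (Q : Matrix (Fin 3) (Fin 3) ℝ) (i j k : Fin 3) :
    ∑ p, ∑ q, ∑ r, Q i p * Q j q * Q k r * lc p q r = Q.det * lc i j k := by
  fin_cases i <;> fin_cases j <;> fin_cases k <;>
    · simp only [Fin.sum_univ_three, Matrix.det_fin_three, Fin.isValue, Fin.reduceFinMk,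
        lc_000, lc_001, lc_002, lc_010, lc_011, lc_012, lc_020, lc_021, lc_022,
        lc_100, lc_101, lc_102, lc_110, lc_111, lc_112, lc_120, lc_121, lc_122,
        lc_200, lc_201, lc_202, lc_210, lc_211, lc_212, lc_220, lc_221, lc_222]
      ring

lemma key (Q : Matrix (Fin 3) (Fin 3) ℝ) (hQ : Qᵀ * Q = 1) (i j l : Fin 3) :
    ∑ p, ∑ q, Q i p * Q j q * lc p q l = Q.det * ∑ m, lc i j m * Q m l := by
  have h : ∀ r s : Fin 3, (∑ k, Q k r * Q k s) = if r = s then (1:ℝ) else 0 := by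
    intro r s
    have := congrFun (congrFun hQ r) s
    simpa [Matrix.mul_apply, Matrix.transpose_apply, Matrix.one_apply] using this
  have hU := detU Q
  calc ∑ p, ∑ q, Q i p * Q j q * lc p q l
      = ∑ r, (∑ p, ∑ q, Q i p * Q j q * lc p q r) * (if r = l then (1:ℝ) else 0) := by
        simp [mul_ite, mul_one, mul_zero]
    _ = ∑ r, (∑ p, ∑ q, Q i p * Q j q * lc p q r) * (∑ k, Q k r * Q k l) := by
        simp_rw [h]
    _ = ∑ k, (∑ p, ∑ q, ∑ r, Q i p * Q j q * Q k r * lc p q r) * Q k l := by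
        simp only [Fin.sum_univ_three]; ring
    _ = ∑ k, (Q.det * lc i j k) * Q k l := by simp_rw [hU]
    _ = Q.det * ∑ m, lc i j m * Q m l := by
        simp only [Fin.sum_univ_three]; ring

lemma main_id (Q : Matrix (Fin 3) (Fin 3) ℝ) (hQ : Qᵀ * Q = 1)
    (A : Matrix (Fin 3) (Fin 3) ℝ) :
    rot Q (toHall A) = toHall (Q.det • (Q * A * Qᵀ)) := by
  funext i j k
  have k0 := key Q hQ i j 0
  have k1 := key Q hQ i j 1
  have k2 := key Q hQ i j 2
  simp only [Fin.sum_univ_three] at k0 k1 k2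
  simp only [rot, toHall, Matrix.smul_apply, Matrix.mul_apply, Matrix.transpose_apply,
    smul_eq_mul, Fin.sum_univ_three]
  linear_combination (A 0 0 * Q k 0 + A 0 1 * Q k 1 + A 0 2 * Q k 2) * k0
    + (A 1 0 * Q k 0 + A 1 1 * Q k 1 + A 1 2 * Q k 2) * k1
    + (A 2 0 * Q k 0 + A 2 1 * Q k 1 + A 2 2 * Q k 2) * k2

lemma toHall_skew (A : Matrix (Fin 3) (Fin 3) ℝ) (i j k : Fin 3) :
    toHall A i j k = - toHall A j i k := by
  simp only [toHall]
  rw [← Finset.sum_neg_distrib]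
  refine Finset.sum_congr rfl fun l _ => ?_
  rw [lc_skew i j l]; ring


/-- If `f` is an isotropic invariant of Hall tensors, then `g(A) := f(εA)`
is invariant under proper rotations of `A`, and invariant under
`A ↦ -QAQᵀ` for improper orthogonal `Q`. -/
theorem invariant_of_hall_invariant
    (f : (Fin 3 → Fin 3 → Fin 3 → ℝ) → ℝ)
    (hf : ∀ (Q : Matrix (Fin 3) (Fin 3) ℝ), Qᵀ * Q = 1 →
      ∀ K : Fin 3 → Fin 3 → Fin 3 → ℝ, (∀ i j k, K i j k = - K j i k) →
        f (rot Q K) = f K)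
    (g : Matrix (Fin 3) (Fin 3) ℝ → ℝ) (hg : ∀ A, g A = f (toHall A)) :
    ∀ (Q : Matrix (Fin 3) (Fin 3) ℝ), Qᵀ * Q = 1 →
      ∀ A : Matrix (Fin 3) (Fin 3) ℝ,
        (Q.det = 1 → g (Q * A * Qᵀ) = g A) ∧
        (Q.det = -1 → g (-(Q * A * Qᵀ)) = g A) := by
  intro Q hQ A
  have hfA := hf Q hQ (toHall A) (toHall_skew A)
  rw [main_id Q hQ A] at hfA
  constructor
  · intro h1
    rw [hg, hg, ← hfA, h1, one_smul]
  · intro h1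
    rw [hg, hg, ← hfA, h1]
    congr 1
    simp
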